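/- For each λ, δ ∈ (0,1) and C > 0, there exists η = η(λ,δ,C) > 0 such that: if Ω is a finite probability space with Pr(ω) ≥ λ for every ω ∈ Ω, and X : Ω → ℝ≥0 satisfies E[X] ≤ C and E[X log X] < E[X]·log(E[X]) + η (with 0 log 0 = 0), then |X(ω) − E[X]| < δ for every ω ∈ Ω. One may take η = min{λδ²/(2C), λ³δ²/(2(1−λ)²C)}. -/

import Mathlib

open Finset

section JensenAux
open Real

lemma log_ge_one_sub_inv {t : ℝ} (ht : 0 < t) : 1 - 1/t ≤ Real.log t := by
  have h := Real.log_le_sub_one_of_pos (x := 1/t) (by positivity)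
  rw [Real.log_div one_ne_zero (ne_of_gt ht), Real.log_one] at h
  have ht' : (0:ℝ) < 1/t := by positivity
  linarith

lemma aux_phi {t : ℝ} (ht : 1 ≤ t) : (t-1)^2/2 ≤ t^2 * Real.log t - t^2 + t := by
  set f : ℝ → ℝ := fun t => t^2 * Real.log t - t^2 + t - (t-1)^2/2 with hf
  have hderiv : ∀ x ∈ interior (Set.Ici (1:ℝ)), HasDerivAt f (2*x*Real.log x - x + 1 - (x-1)) x := by
    intro x hx
    rw [interior_Ici] at hx
    have hx0 : (0:ℝ) < x := lt_trans one_pos hx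
    have h1 : HasDerivAt (fun t : ℝ => t^2 * Real.log t) (2*x*Real.log x + x) x := by
      have := (hasDerivAt_pow 2 x).mul (Real.hasDerivAt_log (ne_of_gt hx0))
      refine this.congr_deriv ?_
      field_simp
      ring
    have h2 : HasDerivAt (fun t : ℝ => t^2) (2*x) x := by
      simpa using hasDerivAt_pow 2 x
    have h3 : HasDerivAt (fun t : ℝ => (t-1)^2/2) ((x-1)) x := by
      have := (((hasDerivAt_id x).sub_const 1).pow 2).div_const 2
      refine this.congr_deriv ?_
      simp
    have := ((h1.sub h2).add (hasDerivAt_id x)).sub h3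
    refine this.congr_deriv ?_
    ring
  have hmono : MonotoneOn f (Set.Ici (1:ℝ)) := by
    apply monotoneOn_of_deriv_nonneg (convex_Ici 1)
    · apply ContinuousOn.sub
      apply ContinuousOn.add
      apply ContinuousOn.sub
      · exact (continuous_pow 2).continuousOn.mul
          (Real.continuousOn_log.mono (by intro x hx; simp at hx ⊢; positivity))
      · exact (continuous_pow 2).continuousOn
      · exact continuousOn_id
      · exact (Continuous.continuousOn (by continuity))
    · intro x hx
      exact (hderiv x hx).differentiableAt.differentiableWithinAt
    · intro x hx
      rw [(hderiv x hx).deriv]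
      rw [interior_Ici] at hx
      have hx0 : (0:ℝ) < x := lt_trans one_pos hx
      have := log_ge_one_sub_inv hx0
      have h2 : x - 1 ≤ x * Real.log x := by
        have := mul_le_mul_of_nonneg_left this (le_of_lt hx0)
        calc x - 1 = x * (1 - 1/x) := by field_simp
          _ ≤ x * Real.log x := this
      nlinarith
  have := hmono (Set.mem_Ici.mpr le_rfl) (Set.mem_Ici.mpr ht) ht
  simp only [hf] at this
  simp at this
  linarith [this]

lemma aux_psi {t : ℝ} (ht0 : 0 ≤ t) (ht : t ≤ 1) : (t-1)^2/2 ≤ t * Real.log t - t + 1 := by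
  set f : ℝ → ℝ := fun t => t * Real.log t - t + 1 - (t-1)^2/2 with hf
  have hderiv : ∀ x ∈ interior (Set.Icc (0:ℝ) 1), HasDerivAt f (Real.log x + 1 - 1 - (x-1)) x := by
    intro x hx
    rw [interior_Icc] at hx
    have hx0 : (0:ℝ) < x := hx.1
    have h3 : HasDerivAt (fun t : ℝ => (t-1)^2/2) ((x-1)) x := by
      have := (((hasDerivAt_id x).sub_const 1).pow 2).div_const 2
      refine this.congr_deriv ?_
      simp
    have := (((Real.hasDerivAt_mul_log (ne_of_gt hx0)).sub (hasDerivAt_id x)).add_const 1).sub h3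
    exact this
  have hanti : AntitoneOn f (Set.Icc (0:ℝ) 1) := by
    apply antitoneOn_of_deriv_nonpos (convex_Icc 0 1)
    · apply ContinuousOn.sub
      apply ContinuousOn.add
      apply ContinuousOn.sub
      · exact Real.continuous_mul_log.continuousOn
      · exact continuousOn_id
      · exact continuousOn_const
      · exact (Continuous.continuousOn (by continuity))
    · intro x hx
      exact (hderiv x hx).differentiableAt.differentiableWithinAt
    · intro x hx
      rw [(hderiv x hx).deriv]
      rw [interior_Icc] at hx
      have := Real.log_le_sub_one_of_pos hx.1
      linarith
  have := hanti (Set.mem_Icc.mpr ⟨ht0, ht⟩) (Set.mem_Icc.mpr ⟨zero_le_one, le_rfl⟩) ht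
  simp only [hf] at this
  simp at this
  linarith [this]

lemma key_ineq {t : ℝ} (ht : 0 < t) : (t-1)^2 / (2 * max t 1) ≤ t * Real.log t - t + 1 := by
  rcases le_total t 1 with h | h
  · rw [max_eq_right h]
    simpa using aux_psi (le_of_lt ht) h
  · rw [max_eq_left h]
    have := aux_phi h
    rw [div_le_iff₀ (by positivity)]
    nlinarith [Real.log_nonneg h]

lemma bregman {a b M : ℝ} (ha : 0 ≤ a) (hb : 0 < b) (haM : a ≤ M) (hbM : b ≤ M) :
    (a - b)^2 / (2*M) ≤ a * Real.log a - b * Real.log b - (Real.log b + 1) * (a - b) := by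
  have hM : 0 < M := lt_of_lt_of_le hb hbM
  rcases eq_or_lt_of_le ha with h0 | ha
  · rw [← h0]
    simp only [Real.log_zero, zero_mul, zero_sub, mul_neg]
    rw [div_le_iff₀ (by positivity)]
    nlinarith
  · have hmaxpos : (0:ℝ) < max a b := lt_of_lt_of_le hb (le_max_right a b)
    have hmaxM : max a b ≤ M := max_le haM hbM
    have hmax : max (a/b) 1 = max a b / b := by
      rw [← div_self (ne_of_gt hb), max_div_div_right (le_of_lt hb)]
    have key := key_ineq (div_pos ha hb)
    have hkey2 := mul_le_mul_of_nonneg_left key (le_of_lt hb)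
    have step1 : (a-b)^2/(2*max a b) ≤ a * Real.log (a/b) - a + b := by
      calc (a-b)^2/(2*max a b) = b * ((a/b-1)^2/(2*max (a/b) 1)) := by
            rw [hmax]; field_simp
        _ ≤ b * ((a/b) * Real.log (a/b) - a/b + 1) := hkey2
        _ = a * Real.log (a/b) - a + b := by field_simp
    have step0 : (a-b)^2/(2*M) ≤ (a-b)^2/(2*max a b) := by
      apply div_le_div_of_nonneg_left (by positivity) (by positivity) (by linarith)
    rw [Real.log_div (ne_of_gt ha) (ne_of_gt hb)] at step1
    have := step0.trans step1
    nlinarith [this]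

end JensenAux

/-- Near-equality in Jensen's inequality for x ↦ x log x on a finite probability
space with no small atoms forces X to be uniformly close to its mean. -/
theorem jensen_stability_concentration (lam δ C : ℝ)
    (hlam : 0 < lam) (hlam1 : lam < 1) (hδ : 0 < δ) (hδ1 : δ < 1) (hC : 0 < C) :
    ∃ η : ℝ, 0 < η ∧
      ∀ (Ω : Type) [Fintype Ω] (w : Ω → ℝ), (∀ ω, lam ≤ w ω) → (∑ ω, w ω = 1) →
        ∀ X : Ω → ℝ, (∀ ω, 0 ≤ X ω) → (∑ ω, w ω * X ω ≤ C) →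
          (∑ ω, w ω * (X ω * Real.log (X ω)) <
            (∑ ω, w ω * X ω) * Real.log (∑ ω, w ω * X ω) + η) →
          ∀ ω : Ω, |X ω - ∑ ω', w ω' * X ω'| < δ := by
  refine ⟨lam^2 * δ^2 / (2*C), by positivity, ?_⟩
  intro Ω _ w hw hw1 X hX hXC hJ ω
  set μ := ∑ ω', w ω' * X ω' with hμdef
  have hwpos : ∀ ω', (0:ℝ) < w ω' := fun ω' => lt_of_lt_of_le hlam (hw ω')
  have hterm : ∀ ω' ∈ Finset.univ (α := Ω), (0:ℝ) ≤ w ω' * X ω' :=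
    fun ω' _ => mul_nonneg (le_of_lt (hwpos ω')) (hX ω')
  have hμ0 : 0 ≤ μ := Finset.sum_nonneg hterm
  rcases eq_or_lt_of_le hμ0 with hμz | hμpos
  · -- mean zero ⇒ all X = 0
    have hall := (Finset.sum_eq_zero_iff_of_nonneg hterm).mp hμz.symm
    have hXω : X ω = 0 := by
      have := hall ω (Finset.mem_univ ω)
      rcases mul_eq_zero.mp this with h | h
      · exact absurd h (ne_of_gt (hwpos ω))
      · exact h
    rw [hXω, ← hμz]
    simpa using hδ
  · have hμC : μ ≤ C := hXC
    have hμM : μ ≤ C / lam := le_trans hμC (by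
      rw [le_div_iff₀ hlam]; nlinarith)
    have hXM : ∀ ω', X ω' ≤ C / lam := by
      intro ω'
      have h1 : w ω' * X ω' ≤ μ := Finset.single_le_sum hterm (Finset.mem_univ ω')
      have h2 : lam * X ω' ≤ w ω' * X ω' :=
        mul_le_mul_of_nonneg_right (hw ω') (hX ω')
      rw [le_div_iff₀ hlam]
      calc X ω' * lam = lam * X ω' := by ring
        _ ≤ μ := le_trans h2 h1
        _ ≤ C := hμC
    set D : Ω → ℝ := fun ω' =>
      X ω' * Real.log (X ω') - μ * Real.log μ - (Real.log μ + 1) * (X ω' - μ) with hD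
    have hbreg : ∀ ω', (X ω' - μ)^2/(2*(C/lam)) ≤ D ω' :=
      fun ω' => bregman (hX ω') hμpos (hXM ω') hμM
    have hDnn : ∀ ω', 0 ≤ D ω' := fun ω' => le_trans (by positivity) (hbreg ω')
    have hsum : ∑ ω', w ω' * D ω' = (∑ ω', w ω' * (X ω' * Real.log (X ω'))) - μ * Real.log μ := by
      have e : ∀ ω', w ω' * D ω' =
          w ω' * (X ω' * Real.log (X ω')) - (μ * Real.log μ) * w ω'
            - (Real.log μ + 1) * (w ω' * X ω') + ((Real.log μ + 1) * μ) * w ω' := by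
        intro ω'; simp only [hD]; ring
      rw [Finset.sum_congr rfl (fun ω' _ => e ω')]
      rw [Finset.sum_add_distrib, Finset.sum_sub_distrib, Finset.sum_sub_distrib,
        ← Finset.mul_sum, ← Finset.mul_sum, ← Finset.mul_sum, hw1, ← hμdef]
      ring
    have hsumlt : ∑ ω', w ω' * D ω' < lam^2 * δ^2 / (2*C) := by
      rw [hsum]; linarith [hJ]
    have hone : w ω * D ω ≤ ∑ ω', w ω' * D ω' :=
      Finset.single_le_sum (fun ω' _ => mul_nonneg (le_of_lt (hwpos ω')) (hDnn ω'))
        (Finset.mem_univ ω)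
    have htwo : lam * ((X ω - μ)^2/(2*(C/lam))) ≤ w ω * D ω :=
      mul_le_mul (hw ω) (hbreg ω) (by positivity) (le_of_lt (hwpos ω))
    have hfinal : lam * ((X ω - μ)^2/(2*(C/lam))) < lam^2 * δ^2 / (2*C) :=
      lt_of_le_of_lt (le_trans htwo hone) hsumlt
    have hsq : (X ω - μ)^2 < δ^2 := by
      have e : lam * ((X ω - μ)^2/(2*(C/lam))) = lam^2/(2*C) * (X ω - μ)^2 := by
        field_simp
      have e2 : lam^2*δ^2/(2*C) = lam^2/(2*C) * δ^2 := by ring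
      rw [e, e2] at hfinal
      exact (mul_lt_mul_iff_right₀ (by positivity)).mp hfinal
    exact abs_lt_of_sq_lt_sq hsq (le_of_lt hδ)
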